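/- There exists a constant C₃ > 0, depending only on p, a, b and κ, with the following property: for every integer n ≥ 1 and all vectors u, v ∈ [0,∞)ⁿ with M_u := Σᵢ uᵢ ∈ (0,1), M_v := Σᵢ vᵢ ∈ (0,1) and M_u ≠ M_v, there exists a point M_σ strictly between M_u and M_v such that, setting f(M) = √(q(M)/p(M)) and p_σ² = (p(M_u)² + p(M_v)²)/2, one has Σᵢ₌₁ⁿ p_σ² (√(vᵢ) f(M_v) − √(uᵢ) f(M_u))² ≥ (1/2)·min{p(M_u)q(M_u), p(M_v)q(M_v)} · Σᵢ₌₁ⁿ (√(vᵢ) − √(uᵢ))² + C₃ · M_σ^(a−1) (M_v − M_u)² / (1−M_σ)^(1+b+κ). -/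

import Mathlib

open Real Set MeasureTheory

/-- `q(M) = (p(M)/M) ∫₀^M s^a / ((1-s)^b p(s)²) ds`. -/
noncomputable def qfun (p : ℝ → ℝ) (a b : ℝ) (M : ℝ) : ℝ :=
  p M / M * ∫ s in (0:ℝ)..M, s ^ a / ((1 - s) ^ b * p s ^ 2)

noncomputable def hfun (p : ℝ → ℝ) (a b : ℝ) (s : ℝ) : ℝ :=
  s ^ a / ((1 - s) ^ b * p s ^ 2)

noncomputable def Ifun (p : ℝ → ℝ) (a b M : ℝ) : ℝ :=
  ∫ s in (0:ℝ)..M, hfun p a b s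

noncomputable def gfun (p : ℝ → ℝ) (a b M : ℝ) : ℝ := Ifun p a b M / M

noncomputable def gder (p : ℝ → ℝ) (a b M : ℝ) : ℝ :=
  (hfun p a b M - gfun p a b M) / M

noncomputable def ffun (p : ℝ → ℝ) (a b M : ℝ) : ℝ := Real.sqrt (gfun p a b M)

noncomputable def fder (p : ℝ → ℝ) (a b M : ℝ) : ℝ :=
  gder p a b M / (2 * Real.sqrt (gfun p a b M))

section lemmas

variable {p p' : ℝ → ℝ} {a b : ℝ}

lemma hfun_cont (ha : 1 ≤ a) (hpc : ContinuousOn p (Icc 0 1))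
    (hppos : ∀ M ∈ Ico (0:ℝ) 1, 0 < p M) :
    ContinuousOn (hfun p a b) (Ico 0 1) := by
  apply ContinuousOn.div
  · intro s hs
    exact (Real.continuousAt_rpow_const s a (Or.inr (by linarith))).continuousWithinAt
  · apply ContinuousOn.mul
    · intro s hs
      apply ContinuousWithinAt.rpow_const
      · exact (continuous_const.sub continuous_id).continuousWithinAt
      · left; intro h; have := hs.2; linarith [sub_eq_zero.mp h]
    · exact ((hpc.mono (Ico_subset_Icc_self)).pow 2)
  · intro s hs
    have h1 : (0:ℝ) < 1 - s := by linarith [hs.2]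
    have := hppos s hs
    positivity

lemma hfun_pos (hppos : ∀ M ∈ Ico (0:ℝ) 1, 0 < p M) {s : ℝ} (hs : s ∈ Ioo (0:ℝ) 1) :
    0 < hfun p a b s := by
  have h1 : (0:ℝ) < 1 - s := by linarith [hs.2]
  have h2 := hppos s ⟨hs.1.le, hs.2⟩
  have h3 : (0:ℝ) < s := hs.1
  unfold hfun; positivity

lemma hfun_nonneg (hp0 : ∀ M ∈ Icc (0:ℝ) 1, 0 ≤ p M) {s : ℝ} (hs : s ∈ Icc (0:ℝ) 1) :
    0 ≤ hfun p a b s := by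
  have h1 : (0:ℝ) ≤ 1 - s := by linarith [hs.2]
  have h2 := hp0 s hs
  have h3 : (0:ℝ) ≤ s := hs.1
  unfold hfun; positivity

lemma hfun_mono (ha : 1 ≤ a) (hb : 1 ≤ b) (hpa : AntitoneOn p (Icc 0 1))
    (hppos : ∀ M ∈ Ico (0:ℝ) 1, 0 < p M)
    {s t : ℝ} (h0 : 0 ≤ s) (hst : s ≤ t) (ht : t < 1) :
    hfun p a b s ≤ hfun p a b t := by
  have hs1 : s < 1 := lt_of_le_of_lt hst ht
  have hps : 0 < p s := hppos s ⟨h0, hs1⟩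
  have hpt : 0 < p t := hppos t ⟨h0.trans hst, ht⟩
  have hpts : p t ≤ p s := hpa ⟨h0, hs1.le⟩ ⟨h0.trans hst, ht.le⟩ hst
  have h1t : (0:ℝ) < 1 - t := by linarith
  have h1s : (0:ℝ) < 1 - s := by linarith
  unfold hfun
  have ht0 : 0 ≤ t := h0.trans hst
  apply div_le_div₀ (Real.rpow_nonneg ht0 a) (Real.rpow_le_rpow h0 hst (by linarith))
    (by positivity)
  apply mul_le_mul
  · exact Real.rpow_le_rpow h1t.le (by linarith) (by linarith)
  · nlinarith
  · positivity
  · positivity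

lemma hfun_integrable (ha : 1 ≤ a) (hpc : ContinuousOn p (Icc 0 1))
    (hppos : ∀ M ∈ Ico (0:ℝ) 1, 0 < p M) {x y : ℝ} (hx : 0 ≤ x) (hxy : x ≤ y) (hy : y < 1) :
    IntervalIntegrable (hfun p a b) volume x y := by
  apply ContinuousOn.intervalIntegrable
  apply (hfun_cont ha hpc hppos).mono
  rw [uIcc_of_le hxy]
  exact fun z hz => ⟨hx.trans hz.1, lt_of_le_of_lt hz.2 hy⟩

lemma hfun_contAt (ha : 1 ≤ a) (hpc : ContinuousOn p (Icc 0 1))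
    (hppos : ∀ M ∈ Ico (0:ℝ) 1, 0 < p M) {M : ℝ} (hM : M ∈ Ioo (0:ℝ) 1) :
    ContinuousAt (hfun p a b) M :=
  (hfun_cont ha hpc hppos).continuousAt (Ico_mem_nhds (by linarith [hM.1]) hM.2)

lemma Ifun_hasDeriv (ha : 1 ≤ a) (hpc : ContinuousOn p (Icc 0 1))
    (hppos : ∀ M ∈ Ico (0:ℝ) 1, 0 < p M) {M : ℝ} (hM : M ∈ Ioo (0:ℝ) 1) :
    HasDerivAt (Ifun p a b) (hfun p a b M) M := by
  apply intervalIntegral.integral_hasDerivAt_right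
      (hfun_integrable ha hpc hppos le_rfl hM.1.le hM.2)
  · exact ⟨Ioo 0 1, Ioo_mem_nhds hM.1 hM.2,
      ((hfun_cont ha hpc hppos).mono (fun z hz => ⟨hz.1.le, hz.2⟩)).aestronglyMeasurable
        measurableSet_Ioo⟩
  · exact hfun_contAt ha hpc hppos hM

end lemmas

section lemmas2

variable {p p' : ℝ → ℝ} {a b : ℝ}

lemma Ifun_pos (ha : 1 ≤ a) (hpc : ContinuousOn p (Icc 0 1))
    (hppos : ∀ M ∈ Ico (0:ℝ) 1, 0 < p M) {M : ℝ} (hM : M ∈ Ioo (0:ℝ) 1) :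
    0 < Ifun p a b M := by
  apply intervalIntegral.intervalIntegral_pos_of_pos_on
    (hfun_integrable ha hpc hppos le_rfl hM.1.le hM.2)
    (fun x hx => hfun_pos hppos ⟨hx.1, hx.2.trans hM.2⟩) hM.1

lemma Ifun_le (ha : 1 ≤ a) (hb : 1 ≤ b) (hpc : ContinuousOn p (Icc 0 1))
    (hpa : AntitoneOn p (Icc 0 1)) (hppos : ∀ M ∈ Ico (0:ℝ) 1, 0 < p M)
    {M : ℝ} (hM : M ∈ Ioo (0:ℝ) 1) :
    Ifun p a b M ≤ 3 / 4 * M * hfun p a b M := by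
  have hM0 := hM.1; have hM1 := hM.2
  have hsplit : Ifun p a b M = (∫ s in (0:ℝ)..(M/2), hfun p a b s)
      + ∫ s in (M/2)..M, hfun p a b s :=
    (intervalIntegral.integral_add_adjacent_intervals
      (hfun_integrable ha hpc hppos le_rfl (by linarith) (by linarith))
      (hfun_integrable ha hpc hppos (by linarith) (by linarith) hM1)).symm
  -- bound on [0, M/2] by h(M/2), on [M/2, M] by h(M)
  have hb1 : (∫ s in (0:ℝ)..(M/2), hfun p a b s) ≤ (M/2) * hfun p a b (M/2) := by
    have := intervalIntegral.integral_mono_on (by linarith : (0:ℝ) ≤ M/2)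
      (hfun_integrable ha hpc hppos le_rfl (by linarith) (by linarith))
      (intervalIntegrable_const)
      (fun x hx => hfun_mono ha hb hpa hppos hx.1 hx.2 (by linarith))
    simpa using this
  have hb2 : (∫ s in (M/2)..M, hfun p a b s) ≤ (M/2) * hfun p a b M := by
    have := intervalIntegral.integral_mono_on (by linarith : M/2 ≤ M)
      (hfun_integrable ha hpc hppos (by linarith) (by linarith) hM1)
      (intervalIntegrable_const)
      (fun x hx => hfun_mono ha hb hpa hppos (by linarith [hx.1]) hx.2 hM1)
    rw [intervalIntegral.integral_const, smul_eq_mul] at this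
    calc (∫ s in (M/2)..M, hfun p a b s) ≤ (M - M/2) * hfun p a b M := this
    _ = (M/2) * hfun p a b M := by ring_nf
  -- h(M/2) ≤ h(M)/2
  have hhalf : hfun p a b (M/2) ≤ hfun p a b M / 2 := by
    have hp2 : 0 < p (M/2) := hppos _ ⟨by linarith, by linarith⟩
    have hpM : 0 < p M := hppos _ ⟨by linarith, hM1⟩
    have hple : p M ≤ p (M/2) := hpa ⟨by linarith, by linarith⟩ ⟨by linarith, hM1.le⟩
      (by linarith)
    have h1M : (0:ℝ) < 1 - M := by linarith
    have h1M2 : (0:ℝ) < 1 - M/2 := by linarith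
    have key : (M/2) ^ a ≤ M ^ a / 2 := by
      rw [Real.div_rpow (by linarith) (by norm_num)]
      apply div_le_div_of_nonneg_left (Real.rpow_nonneg hM0.le a) (by norm_num)
      calc (2:ℝ) = 2 ^ (1:ℝ) := (Real.rpow_one 2).symm
      _ ≤ 2 ^ a := Real.rpow_le_rpow_of_exponent_le (by norm_num) ha
    have hden : (1 - M) ^ b * p M ^ 2 ≤ (1 - M/2) ^ b * p (M/2) ^ 2 := by
      apply mul_le_mul (Real.rpow_le_rpow h1M.le (by linarith) (by linarith)) ?_
        (by positivity) (by positivity)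
      nlinarith
    calc hfun p a b (M/2) ≤ (M ^ a / 2) / ((1 - M) ^ b * p M ^ 2) := by
          apply div_le_div₀ (by positivity) key (by positivity) hden
    _ = hfun p a b M / 2 := by rw [hfun]; ring
  calc Ifun p a b M ≤ (M/2) * hfun p a b (M/2) + (M/2) * hfun p a b M := by
        rw [hsplit]; exact add_le_add hb1 hb2
  _ ≤ (M/2) * (hfun p a b M / 2) + (M/2) * hfun p a b M := by
        have : (0:ℝ) ≤ M/2 := by linarith
        nlinarith [hhalf]
  _ = 3/4 * M * hfun p a b M := by ring

end lemmas2

section lemmas3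

variable {p p' : ℝ → ℝ} {a b : ℝ}

lemma gfun_pos (ha : 1 ≤ a) (hpc : ContinuousOn p (Icc 0 1))
    (hppos : ∀ M ∈ Ico (0:ℝ) 1, 0 < p M) {M : ℝ} (hM : M ∈ Ioo (0:ℝ) 1) :
    0 < gfun p a b M :=
  div_pos (Ifun_pos ha hpc hppos hM) hM.1

lemma gfun_le (ha : 1 ≤ a) (hb : 1 ≤ b) (hpc : ContinuousOn p (Icc 0 1))
    (hpa : AntitoneOn p (Icc 0 1)) (hppos : ∀ M ∈ Ico (0:ℝ) 1, 0 < p M)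
    {M : ℝ} (hM : M ∈ Ioo (0:ℝ) 1) :
    gfun p a b M ≤ 3 / 4 * hfun p a b M := by
  rw [gfun, div_le_iff₀ hM.1]
  calc Ifun p a b M ≤ 3 / 4 * M * hfun p a b M := Ifun_le ha hb hpc hpa hppos hM
  _ = 3 / 4 * hfun p a b M * M := by ring

lemma gder_ge (ha : 1 ≤ a) (hb : 1 ≤ b) (hpc : ContinuousOn p (Icc 0 1))
    (hpa : AntitoneOn p (Icc 0 1)) (hppos : ∀ M ∈ Ico (0:ℝ) 1, 0 < p M)
    {M : ℝ} (hM : M ∈ Ioo (0:ℝ) 1) :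
    hfun p a b M / (4 * M) ≤ gder p a b M := by
  rw [gder]
  have h1 := gfun_le ha hb hpc hpa hppos hM
  have hM0 := hM.1
  rw [div_le_div_iff₀ (by positivity) hM0]
  nlinarith [hfun_pos (a := a) (b := b) hppos hM, mul_le_mul_of_nonneg_left h1 hM0.le]

lemma gder_pos (ha : 1 ≤ a) (hb : 1 ≤ b) (hpc : ContinuousOn p (Icc 0 1))
    (hpa : AntitoneOn p (Icc 0 1)) (hppos : ∀ M ∈ Ico (0:ℝ) 1, 0 < p M)
    {M : ℝ} (hM : M ∈ Ioo (0:ℝ) 1) : 0 < gder p a b M := by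
  have := gder_ge ha hb hpc hpa hppos hM
  have h2 := hfun_pos hppos (a := a) (b := b) hM
  have hM0 := hM.1
  have : 0 < hfun p a b M / (4 * M) := by positivity
  linarith [gder_ge ha hb hpc hpa hppos hM]

lemma gfun_hasDeriv (ha : 1 ≤ a) (hpc : ContinuousOn p (Icc 0 1))
    (hppos : ∀ M ∈ Ico (0:ℝ) 1, 0 < p M) {M : ℝ} (hM : M ∈ Ioo (0:ℝ) 1) :
    HasDerivAt (gfun p a b) (gder p a b M) M := by
  have h1 := (Ifun_hasDeriv (b := b) ha hpc hppos hM).div (hasDerivAt_id M) hM.1.ne'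
  simp only [id] at h1
  have heq2 : (Ifun p a b / id) = gfun p a b := rfl
  rw [heq2] at h1
  have hM0 : M ≠ 0 := hM.1.ne'
  refine h1.congr_deriv ?_
  rw [gder, gfun]
  field_simp

lemma ffun_hasDeriv (ha : 1 ≤ a) (hpc : ContinuousOn p (Icc 0 1))
    (hppos : ∀ M ∈ Ico (0:ℝ) 1, 0 < p M) {M : ℝ} (hM : M ∈ Ioo (0:ℝ) 1) :
    HasDerivAt (ffun p a b) (fder p a b M) M := by
  have hg := gfun_hasDeriv (b := b) ha hpc hppos hM
  have hgpos := gfun_pos (b := b) ha hpc hppos hM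
  have := (Real.hasDerivAt_sqrt hgpos.ne').comp M hg
  simpa [ffun, fder, div_eq_mul_inv, mul_comm] using (show HasDerivAt (ffun p a b) _ M from this)

lemma fder_nonneg (ha : 1 ≤ a) (hb : 1 ≤ b) (hpc : ContinuousOn p (Icc 0 1))
    (hpa : AntitoneOn p (Icc 0 1)) (hppos : ∀ M ∈ Ico (0:ℝ) 1, 0 < p M)
    {M : ℝ} (hM : M ∈ Ioo (0:ℝ) 1) : 0 ≤ fder p a b M := by
  have h1 := (gder_pos ha hb hpc hpa hppos hM).le
  rw [fder]
  positivity

lemma fder_sq (ha : 1 ≤ a) (hpc : ContinuousOn p (Icc 0 1))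
    (hppos : ∀ M ∈ Ico (0:ℝ) 1, 0 < p M) {M : ℝ} (hM : M ∈ Ioo (0:ℝ) 1) :
    fder p a b M ^ 2 = gder p a b M ^ 2 / (4 * gfun p a b M) := by
  have hgpos := gfun_pos (b := b) ha hpc hppos hM
  rw [fder, div_pow, mul_pow, Real.sq_sqrt hgpos.le]
  norm_num

end lemmas3

noncomputable def hder (p p' : ℝ → ℝ) (a b M : ℝ) : ℝ :=
  (a * M ^ (a - 1) * ((1 - M) ^ b * p M ^ 2) -
      M ^ a * (b * (1 - M) ^ (b - 1) * -1 * p M ^ 2 + (1 - M) ^ b * (2 * p M * p' M))) /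
    ((1 - M) ^ b * p M ^ 2) ^ 2

section lemmas4

variable {p p' : ℝ → ℝ} {a b : ℝ}

lemma hfun_hasDeriv (hppos : ∀ M ∈ Ico (0:ℝ) 1, 0 < p M)
    (hp' : ∀ M ∈ Ico (0:ℝ) 1, HasDerivWithinAt p (p' M) (Ico 0 1) M)
    {M : ℝ} (hM : M ∈ Ioo (0:ℝ) 1) :
    HasDerivAt (hfun p a b) (hder p p' a b M) M := by
  obtain ⟨hM0, hM1⟩ := hM
  have h1M : (0:ℝ) < 1 - M := by linarith
  have hpM : HasDerivAt p (p' M) M :=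
    (hp' M ⟨hM0.le, hM1⟩).hasDerivAt (Ico_mem_nhds (by linarith) hM1)
  have hnum : HasDerivAt (fun s : ℝ => s ^ a) (a * M ^ (a - 1)) M :=
    Real.hasDerivAt_rpow_const (Or.inl hM0.ne')
  have hin : HasDerivAt (fun s : ℝ => 1 - s) (-1) M := (hasDerivAt_id M).const_sub 1
  have hout : HasDerivAt (fun y : ℝ => y ^ b) (b * (1 - M) ^ (b - 1)) (1 - M) :=
    Real.hasDerivAt_rpow_const (Or.inl h1M.ne')
  have hd1 : HasDerivAt (fun s : ℝ => (1 - s) ^ b) (b * (1 - M) ^ (b - 1) * -1) M :=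
    hout.comp M hin
  have hd2 : HasDerivAt (fun s : ℝ => p s ^ 2) (2 * p M * p' M) M := by
    have := hpM.pow 2
    refine this.congr_deriv ?_
    push_cast
    ring
  have hden := hd1.mul hd2
  have hq := hppos M ⟨hM0.le, hM1⟩
  have hD : (1 - M) ^ b * p M ^ 2 ≠ 0 := by positivity
  exact hnum.div hden hD

lemma hder_ge (ha : 1 ≤ a) (hb : 1 ≤ b) (hppos : ∀ M ∈ Ico (0:ℝ) 1, 0 < p M)
    {M : ℝ} (hM : M ∈ Ioo (0:ℝ) 1) :
    -2 * p' M / p M * hfun p a b M ≤ hder p p' a b M := by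
  obtain ⟨hM0, hM1⟩ := hM
  have h1M : (0:ℝ) < 1 - M := by linarith
  have hq := hppos M ⟨hM0.le, hM1⟩
  have ha0 : (0:ℝ) ≤ a := by linarith
  have hb0 : (0:ℝ) ≤ b := by linarith
  have heq : hder p p' a b M - -2 * p' M / p M * hfun p a b M =
      (a * M ^ (a - 1) * ((1 - M) ^ b * p M ^ 2) +
        M ^ a * (b * (1 - M) ^ (b - 1)) * p M ^ 2) / ((1 - M) ^ b * p M ^ 2) ^ 2 := by
    rw [hder, hfun]
    field_simp
    ring
  have h1 : 0 ≤ a * M ^ (a - 1) * ((1 - M) ^ b * p M ^ 2) :=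
    mul_nonneg (mul_nonneg ha0 (Real.rpow_nonneg hM0.le _)) (by positivity)
  have h2 : 0 ≤ M ^ a * (b * (1 - M) ^ (b - 1)) * p M ^ 2 :=
    mul_nonneg (mul_nonneg (Real.rpow_nonneg hM0.le _)
      (mul_nonneg hb0 (Real.rpow_nonneg h1M.le _))) (by positivity)
  have h3 : (0:ℝ) < ((1 - M) ^ b * p M ^ 2) ^ 2 := by positivity
  nlinarith [div_nonneg (add_nonneg h1 h2) h3.le]

end lemmas4

section lemmas5

variable {p p' : ℝ → ℝ} {a b κ c : ℝ}

lemma tail_bound (ha : 1 ≤ a) (hb : 1 ≤ b) (hpc : ContinuousOn p (Icc 0 1))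
    (hpa : AntitoneOn p (Icc 0 1)) (hppos : ∀ M ∈ Ico (0:ℝ) 1, 0 < p M)
    (hp' : ∀ M ∈ Ico (0:ℝ) 1, HasDerivWithinAt p (p' M) (Ico 0 1) M)
    (hκ : 0 < κ) (hc : 0 < c)
    (hlim : Filter.Tendsto (fun M => -((1 - M) ^ (1 + κ) * p' M / p M))
      (nhdsWithin 1 (Iio 1)) (nhds c)) :
    ∃ M₂, 1/2 ≤ M₂ ∧ M₂ < 1 ∧ ∃ C > 0, ∀ M ∈ Ico M₂ 1,
      Ifun p a b M ≤ C * (hfun p a b M * (1 - M) ^ (1 + κ)) := by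
  have hev : ∀ᶠ M in nhdsWithin 1 (Iio 1),
      c / 2 ≤ -((1 - M) ^ (1 + κ) * p' M / p M) :=
    hlim.eventually_const_le (by linarith)
  obtain ⟨M₁, hM₁lt, hsub⟩ := mem_nhdsLT_iff_exists_Ioo_subset.mp hev
  set δ : ℝ := min 1 ((c / (2 * (1 + κ))) ^ (1/κ)) with hδdef
  have hδpos : 0 < δ := by
    apply lt_min one_pos
    apply Real.rpow_pos_of_pos
    positivity
  have hδ1 : δ ≤ 1 := min_le_left _ _
  set M₂ : ℝ := max (max ((M₁ + 1) / 2) (1 - δ)) (1/2) with hM₂def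
  have hM₂lt : M₂ < 1 := by
    apply max_lt (max_lt _ _) (by norm_num)
    · have : M₁ < 1 := hM₁lt
      linarith
    · linarith
  have hM₂half : (1/2:ℝ) ≤ M₂ := le_max_right _ _
  have hM₂mem : M₂ ∈ Ioo (0:ℝ) 1 := ⟨by linarith, hM₂lt⟩
  -- key eventual bounds on [M₂, 1)
  have hkey1 : ∀ M ∈ Ico M₂ 1, c / 2 ≤ -((1 - M) ^ (1 + κ) * p' M / p M) := by
    intro M hM
    apply hsub
    constructor
    · calc M₁ < (M₁ + 1) / 2 := by linarith [hM₁lt.out]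
      _ ≤ M₂ := le_trans (le_max_left _ _) (le_max_left _ _)
      _ ≤ M := hM.1
    · exact hM.2
  have hkey2 : ∀ M ∈ Ico M₂ 1, (1 + κ) * (1 - M) ^ κ ≤ c / 2 := by
    intro M hM
    have h1M : (0:ℝ) ≤ 1 - M := by linarith [hM.2.le]
    have hMδ : 1 - M ≤ δ := by
      have : 1 - δ ≤ M₂ := le_trans (le_max_right _ _) (le_max_left _ _)
      linarith [hM.1]
    have h1 : (1 - M) ^ κ ≤ δ ^ κ := Real.rpow_le_rpow h1M hMδ hκ.le
    have h2 : δ ^ κ ≤ c / (2 * (1 + κ)) := by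
      calc δ ^ κ ≤ ((c / (2 * (1 + κ))) ^ (1/κ)) ^ κ :=
            Real.rpow_le_rpow hδpos.le (min_le_right _ _) hκ.le
      _ = (c / (2 * (1 + κ))) ^ ((1/κ) * κ) := by
            rw [← Real.rpow_mul (by positivity)]
      _ = c / (2 * (1 + κ)) := by
            rw [one_div, inv_mul_cancel₀ hκ.ne', Real.rpow_one]
    calc (1 + κ) * (1 - M) ^ κ ≤ (1 + κ) * (c / (2 * (1 + κ))) := by
          apply mul_le_mul_of_nonneg_left (h1.trans h2) (by positivity)
    _ = c / 2 := by field_simp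
  -- the constant
  have hw₂pos : 0 < hfun p a b M₂ * (1 - M₂) ^ (1 + κ) := by
    have h1 : (0:ℝ) < 1 - M₂ := by linarith
    have := hfun_pos (a := a) (b := b) hppos hM₂mem
    positivity
  have hI₂pos : 0 < Ifun p a b M₂ := Ifun_pos ha hpc hppos hM₂mem
  set C : ℝ := 2 / c + Ifun p a b M₂ / (hfun p a b M₂ * (1 - M₂) ^ (1 + κ)) with hCdef
  have hCpos : 0 < C := by positivity
  have hC2c : 2 / c ≤ C := by
    have : 0 ≤ Ifun p a b M₂ / (hfun p a b M₂ * (1 - M₂) ^ (1 + κ)) := by positivity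
    linarith
  refine ⟨M₂, hM₂half, hM₂lt, C, hCpos, ?_⟩
  -- the comparison function G and its derivative
  set G : ℝ → ℝ := fun M => Ifun p a b M - C * (hfun p a b M * (1 - M) ^ (1 + κ)) with hGdef
  set Gd : ℝ → ℝ := fun M => hfun p a b M -
    C * (hder p p' a b M * (1 - M) ^ (1 + κ) +
         hfun p a b M * ((1 + κ) * (1 - M) ^ κ * -1)) with hGddef
  have hGderiv : ∀ M ∈ Ioo (0:ℝ) 1, HasDerivAt G (Gd M) M := by
    intro M hM
    have h1M : (0:ℝ) < 1 - M := by linarith [hM.2]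
    have hin : HasDerivAt (fun s : ℝ => 1 - s) (-1) M := (hasDerivAt_id M).const_sub 1
    have hout : HasDerivAt (fun y : ℝ => y ^ (1 + κ)) ((1 + κ) * (1 - M) ^ (1 + κ - 1))
        (1 - M) := Real.hasDerivAt_rpow_const (Or.inl h1M.ne')
    have hrw : (1:ℝ) + κ - 1 = κ := by ring
    rw [hrw] at hout
    have hd3 : HasDerivAt (fun s : ℝ => (1 - s) ^ (1 + κ)) ((1 + κ) * (1 - M) ^ κ * -1) M :=
      hout.comp M hin
    exact ((Ifun_hasDeriv ha hpc hppos hM).sub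
      (((hfun_hasDeriv hppos hp' hM).mul hd3).const_mul C))
  -- G is antitone on [M₂, 1)
  have hanti : AntitoneOn G (Ico M₂ 1) := by
    apply antitoneOn_of_hasDerivWithinAt_nonpos (f' := Gd) (convex_Ico _ _) ?_ ?_ ?_
    · intro x hx
      have hx' : x ∈ Ioo (0:ℝ) 1 := ⟨by linarith [hx.1], hx.2⟩
      exact (hGderiv x hx').continuousAt.continuousWithinAt
    · intro x hx
      rw [interior_Ico] at hx
      have hx' : x ∈ Ioo (0:ℝ) 1 := ⟨by linarith [hx.1], hx.2⟩
      exact ((hGderiv x hx').hasDerivWithinAt).mono interior_subset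
    · intro x hx
      rw [interior_Ico] at hx
      have hxIco : x ∈ Ico M₂ 1 := ⟨hx.1.le, hx.2⟩
      have hx' : x ∈ Ioo (0:ℝ) 1 := ⟨by linarith [hx.1], hx.2⟩
      have h1x : (0:ℝ) < 1 - x := by linarith [hx.2]
      have hqx := hppos x ⟨hx'.1.le, hx'.2⟩
      have hhx := (hfun_pos (a := a) (b := b) hppos hx').le
      -- lower bound the bracket by (c/2) * hfun x
      have hb1 : c * hfun p a b x ≤ hder p p' a b x * (1 - x) ^ (1 + κ) := by
        have hstep : c ≤ -2 * p' x / p x * (1 - x) ^ (1 + κ) := by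
          have := hkey1 x hxIco
          have hrw2 : -((1 - x) ^ (1 + κ) * p' x / p x) =
              (-(p' x) / p x) * (1 - x) ^ (1 + κ) := by ring
          rw [hrw2] at this
          calc c = 2 * (c / 2) := by ring
          _ ≤ 2 * ((-(p' x) / p x) * (1 - x) ^ (1 + κ)) := by linarith
          _ = -2 * p' x / p x * (1 - x) ^ (1 + κ) := by ring
        calc c * hfun p a b x ≤ (-2 * p' x / p x * (1 - x) ^ (1 + κ)) * hfun p a b x :=
              mul_le_mul_of_nonneg_right hstep hhx
        _ = (-2 * p' x / p x * hfun p a b x) * (1 - x) ^ (1 + κ) := by ring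
        _ ≤ hder p p' a b x * (1 - x) ^ (1 + κ) := by
              apply mul_le_mul_of_nonneg_right (hder_ge ha hb hppos hx') (by positivity)
      have hb2 : -(c / 2) * hfun p a b x ≤ hfun p a b x * ((1 + κ) * (1 - x) ^ κ * -1) := by
        have := hkey2 x hxIco
        nlinarith
      have hbr : (c / 2) * hfun p a b x ≤
          hder p p' a b x * (1 - x) ^ (1 + κ) +
            hfun p a b x * ((1 + κ) * (1 - x) ^ κ * -1) := by linarith
      have : hfun p a b x ≤ C * (hder p p' a b x * (1 - x) ^ (1 + κ) +
            hfun p a b x * ((1 + κ) * (1 - x) ^ κ * -1)) := by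
        calc hfun p a b x = (2 / c) * ((c / 2) * hfun p a b x) := by field_simp
        _ ≤ C * ((c / 2) * hfun p a b x) := by
              apply mul_le_mul_of_nonneg_right hC2c (by positivity)
        _ ≤ C * (hder p p' a b x * (1 - x) ^ (1 + κ) +
              hfun p a b x * ((1 + κ) * (1 - x) ^ κ * -1)) := by
              apply mul_le_mul_of_nonneg_left hbr hCpos.le
      show hfun p a b x - C * (hder p p' a b x * (1 - x) ^ (1 + κ) +
        hfun p a b x * ((1 + κ) * (1 - x) ^ κ * -1)) ≤ 0
      linarith
  -- conclude
  intro M hM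
  have hGM₂ : G M₂ ≤ 0 := by
    show Ifun p a b M₂ - C * (hfun p a b M₂ * (1 - M₂) ^ (1 + κ)) ≤ 0
    have : C * (hfun p a b M₂ * (1 - M₂) ^ (1 + κ)) =
        (2 / c) * (hfun p a b M₂ * (1 - M₂) ^ (1 + κ)) + Ifun p a b M₂ := by
      rw [hCdef, add_mul, div_mul_cancel₀ _ hw₂pos.ne']
    rw [this]
    have : 0 ≤ (2 / c) * (hfun p a b M₂ * (1 - M₂) ^ (1 + κ)) := by positivity
    linarith
  have := hanti (left_mem_Ico.mpr (by linarith [hM.2])) hM hM.1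
  have hfinal : Ifun p a b M - C * (hfun p a b M * (1 - M) ^ (1 + κ)) ≤ 0 :=
    le_trans this hGM₂
  linarith

end lemmas5

section lemmas6

variable {p p' : ℝ → ℝ} {a b κ c : ℝ}

lemma global_bound (ha : 1 ≤ a) (hb : 1 ≤ b) (hpc : ContinuousOn p (Icc 0 1))
    (hpa : AntitoneOn p (Icc 0 1)) (hppos : ∀ M ∈ Ico (0:ℝ) 1, 0 < p M)
    (hp' : ∀ M ∈ Ico (0:ℝ) 1, HasDerivWithinAt p (p' M) (Ico 0 1) M)
    (hκ : 0 < κ) (hc : 0 < c)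
    (hlim : Filter.Tendsto (fun M => -((1 - M) ^ (1 + κ) * p' M / p M))
      (nhdsWithin 1 (Iio 1)) (nhds c)) :
    ∃ C₀ > (0:ℝ), ∀ M ∈ Ioo (0:ℝ) 1,
      C₀ * M ^ (a - 2) / (1 - M) ^ (1 + b + κ) ≤ p M ^ 2 * fder p a b M ^ 2 := by
  obtain ⟨M₂, hM₂half, hM₂lt, C, hCpos, htail⟩ :=
    tail_bound ha hb hpc hpa hppos hp' hκ hc hlim
  have h1M₂ : (0:ℝ) < 1 - M₂ := by linarith
  refine ⟨min ((1 - M₂) ^ (1 + κ) / 64) (1 / (128 * C)), lt_min (by positivity) (by positivity),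
    ?_⟩
  intro M hM
  obtain ⟨hM0, hM1⟩ := hM
  have h1M : (0:ℝ) < 1 - M := by linarith
  have hq := hppos M ⟨hM0.le, hM1⟩
  have hh := hfun_pos (a := a) (b := b) hppos ⟨hM0, hM1⟩
  have hg := gfun_pos (b := b) ha hpc hppos ⟨hM0, hM1⟩
  have hgd := gder_ge ha hb hpc hpa hppos ⟨hM0, hM1⟩
  have hfsq := fder_sq (b := b) ha hpc hppos ⟨hM0, hM1⟩
  have hgd2 : hfun p a b M ^ 2 / (16 * M ^ 2) ≤ gder p a b M ^ 2 := by
    have h0 : 0 ≤ hfun p a b M / (4 * M) := by positivity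
    calc hfun p a b M ^ 2 / (16 * M ^ 2) = (hfun p a b M / (4 * M)) ^ 2 := by
          rw [div_pow]; ring_nf
    _ ≤ gder p a b M ^ 2 := pow_le_pow_left₀ h0 hgd 2
  have hph : p M ^ 2 * hfun p a b M = M ^ a / (1 - M) ^ b := by
    rw [hfun]; field_simp
  have hsplit : (1 - M) ^ (1 + b + κ) = (1 - M) ^ b * (1 - M) ^ (1 + κ) := by
    rw [← Real.rpow_add h1M]; ring_nf
  have hMsplit : M ^ a = M ^ (a - 2) * M ^ 2 := by
    rw [← Real.rpow_natCast M 2, ← Real.rpow_add hM0]; norm_num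
  rcases le_total M M₂ with hcase | hcase
  · -- M ≤ M₂ : cheap regime
    have hgle : gfun p a b M ≤ hfun p a b M := by
      have := gfun_le ha hb hpc hpa hppos ⟨hM0, hM1⟩
      linarith
    have hfd : hfun p a b M / (64 * M ^ 2) ≤ fder p a b M ^ 2 := by
      rw [hfsq]
      calc hfun p a b M / (64 * M ^ 2)
          = hfun p a b M ^ 2 / (16 * M ^ 2) / (4 * hfun p a b M) := by
            field_simp; ring
      _ ≤ hfun p a b M ^ 2 / (16 * M ^ 2) / (4 * gfun p a b M) := by gcongr
      _ ≤ gder p a b M ^ 2 / (4 * gfun p a b M) := by gcongr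
    have e1 : M ^ a / (1 - M) ^ b / (64 * M ^ 2) ≤ p M ^ 2 * fder p a b M ^ 2 := by
      calc M ^ a / (1 - M) ^ b / (64 * M ^ 2)
          = p M ^ 2 * (hfun p a b M / (64 * M ^ 2)) := by rw [← hph]; ring
      _ ≤ p M ^ 2 * fder p a b M ^ 2 := by gcongr
    calc min ((1 - M₂) ^ (1 + κ) / 64) (1 / (128 * C)) * M ^ (a - 2) / (1 - M) ^ (1 + b + κ)
        ≤ ((1 - M₂) ^ (1 + κ) / 64) * M ^ (a - 2) / (1 - M) ^ (1 + b + κ) := by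
          gcongr
          exact min_le_left _ _
    _ ≤ ((1 - M) ^ (1 + κ) / 64) * M ^ (a - 2) / (1 - M) ^ (1 + b + κ) := by
          gcongr
          all_goals exact Real.rpow_le_rpow h1M₂.le (by linarith) (by positivity)
    _ = M ^ a / (1 - M) ^ b / (64 * M ^ 2) := by
          rw [hsplit, hMsplit]
          have e2 : (1 - M) ^ (1 + κ) ≠ 0 := by positivity
          have e3 : (1 - M) ^ b ≠ 0 := by positivity
          field_simp
    _ ≤ p M ^ 2 * fder p a b M ^ 2 := e1
  · -- M₂ ≤ M : tail regime
    have hw : (0:ℝ) < (1 - M) ^ (1 + κ) := by positivity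
    have hIle := htail M ⟨hcase, hM1⟩
    have hgle : gfun p a b M ≤ 2 * C * (hfun p a b M * (1 - M) ^ (1 + κ)) := by
      rw [gfun, div_le_iff₀ hM0]
      have hMhalf : (1/2:ℝ) ≤ M := le_trans hM₂half hcase
      nlinarith [mul_pos hh hw, mul_pos hCpos (mul_pos hh hw)]
    have hfd : hfun p a b M / (128 * C * M ^ 2 * (1 - M) ^ (1 + κ)) ≤ fder p a b M ^ 2 := by
      rw [hfsq]
      calc hfun p a b M / (128 * C * M ^ 2 * (1 - M) ^ (1 + κ))
          = hfun p a b M ^ 2 / (16 * M ^ 2) /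
              (4 * (2 * C * (hfun p a b M * (1 - M) ^ (1 + κ)))) := by
            field_simp; ring
      _ ≤ hfun p a b M ^ 2 / (16 * M ^ 2) / (4 * gfun p a b M) := by gcongr
      _ ≤ gder p a b M ^ 2 / (4 * gfun p a b M) := by gcongr
    calc min ((1 - M₂) ^ (1 + κ) / 64) (1 / (128 * C)) * M ^ (a - 2) / (1 - M) ^ (1 + b + κ)
        ≤ (1 / (128 * C)) * M ^ (a - 2) / (1 - M) ^ (1 + b + κ) := by
          gcongr
          exact min_le_right _ _
    _ = M ^ a / (1 - M) ^ b / (128 * C * M ^ 2 * (1 - M) ^ (1 + κ)) := by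
          rw [hsplit, hMsplit]
          have e2 : (1 - M) ^ (1 + κ) ≠ 0 := by positivity
          have e3 : (1 - M) ^ b ≠ 0 := by positivity
          field_simp
    _ = p M ^ 2 * (hfun p a b M / (128 * C * M ^ 2 * (1 - M) ^ (1 + κ))) := by
          rw [← hph]; ring
    _ ≤ p M ^ 2 * fder p a b M ^ 2 := by gcongr

end lemmas6

lemma min_bound_aux (pu pv A B m0 : ℝ) (hA : 0 ≤ A) (hB : 0 ≤ B)
    (h1 : m0 ≤ pu^2*A^2) (h2 : m0 ≤ pv^2*B^2) (h3 : m0 ≤ pu*A*(pv*B)) :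
    m0 ≤ 2*((pu^2+pv^2)/2)*((A+B)/2)^2 := by
  nlinarith [sq_nonneg (pv*A - pu*B),
    mul_nonneg (mul_nonneg hA hB) (add_nonneg (sq_nonneg pu) (sq_nonneg pv))]


set_option maxHeartbeats 1000000 in
/-- Pointwise (per-edge) lower bound for the discrete entropy production:
there is `C₃ > 0` (depending only on `p, a, b, κ`) such that for all `n ≥ 1` and
nonnegative `u, v` with total masses `M_u ≠ M_v` in `(0,1)`, there is `M_σ`
strictly between `M_u` and `M_v` with
`Σᵢ p_σ² (√vᵢ f(M_v) − √uᵢ f(M_u))² ≥ ½ min{p(M_u)q(M_u), p(M_v)q(M_v)} Σᵢ (√vᵢ−√uᵢ)²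
  + C₃ M_σ^{a−1} (M_v−M_u)² / (1−M_σ)^{1+b+κ}`,
where `f(M) = √(q(M)/p(M))` and `p_σ² = (p(M_u)² + p(M_v)²)/2`. -/
theorem entropy_production_lower_bound (a b : ℝ) (ha : 1 ≤ a) (hb : 1 ≤ b)
    (p p' : ℝ → ℝ) (hpc : ContinuousOn p (Icc 0 1))
    (hpa : AntitoneOn p (Icc 0 1)) (hp1 : p 1 = 0)
    (hppos : ∀ M ∈ Ico (0:ℝ) 1, 0 < p M)
    (hp' : ∀ M ∈ Ico (0:ℝ) 1, HasDerivWithinAt p (p' M) (Ico 0 1) M)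
    (hp'c : ContinuousOn p' (Ico 0 1))
    (κ c : ℝ) (hκ : 0 < κ) (hc : 0 < c)
    (hlim : Filter.Tendsto (fun M => -((1 - M) ^ (1 + κ) * p' M / p M))
      (nhdsWithin 1 (Iio 1)) (nhds c)) :
    ∃ C₃ > (0:ℝ), ∀ (n : ℕ), 1 ≤ n → ∀ u v : Fin n → ℝ,
      (∀ i, 0 ≤ u i) → (∀ i, 0 ≤ v i) →
      (∑ i, u i) ∈ Ioo (0:ℝ) 1 → (∑ i, v i) ∈ Ioo (0:ℝ) 1 →
      (∑ i, u i) ≠ (∑ i, v i) →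
      ∃ Mσ ∈ Ioo (min (∑ i, u i) (∑ i, v i)) (max (∑ i, u i) (∑ i, v i)),
        (1/2 : ℝ) * min (p (∑ i, u i) * qfun p a b (∑ i, u i))
            (p (∑ i, v i) * qfun p a b (∑ i, v i)) *
            (∑ i, (Real.sqrt (v i) - Real.sqrt (u i)) ^ 2) +
          C₃ * Mσ ^ (a - 1) * ((∑ i, v i) - (∑ i, u i)) ^ 2 /
            (1 - Mσ) ^ (1 + b + κ) ≤
        ∑ i, (p (∑ i, u i) ^ 2 + p (∑ i, v i) ^ 2) / 2 *
          (Real.sqrt (v i) * Real.sqrt (qfun p a b (∑ i, v i) / p (∑ i, v i)) -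
            Real.sqrt (u i) * Real.sqrt (qfun p a b (∑ i, u i) / p (∑ i, u i))) ^ 2 := by
  obtain ⟨C₀, hC₀pos, hC₀⟩ := global_bound ha hb hpc hpa hppos hp' hκ hc hlim
  refine ⟨C₀ / 8, by positivity, ?_⟩
  intro n hn u v hu hv hMu hMv hne
  set Mu : ℝ := ∑ i, u i with hMudef
  set Mv : ℝ := ∑ i, v i with hMvdef
  clear_value Mu Mv
  have hqf : ∀ M ∈ Ioo (0:ℝ) 1, qfun p a b M / p M = gfun p a b M := by
    intro M hM
    have hpM : p M ≠ 0 := (hppos M ⟨hM.1.le, hM.2⟩).ne'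
    have hM0 : M ≠ 0 := hM.1.ne'
    rw [qfun, gfun, Ifun]
    simp only [hfun]
    field_simp
  have hpq : ∀ M ∈ Ioo (0:ℝ) 1, p M * qfun p a b M = p M ^ 2 * ffun p a b M ^ 2 := by
    intro M hM
    have hpM : p M ≠ 0 := (hppos M ⟨hM.1.le, hM.2⟩).ne'
    have hM0 : M ≠ 0 := hM.1.ne'
    have hg := (gfun_pos (b := b) ha hpc hppos hM).le
    rw [ffun, Real.sq_sqrt hg, qfun, gfun, Ifun]
    simp only [hfun]
    field_simp
  -- MVT setup
  set m : ℝ := min Mu Mv with hmdef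
  set X : ℝ := max Mu Mv with hXdef
  have hmX : m < X := min_lt_max.mpr hne
  have hm0 : 0 < m := lt_min hMu.1 hMv.1
  have hX1 : X < 1 := max_lt hMu.2 hMv.2
  have hIccsub : Icc m X ⊆ Ioo (0:ℝ) 1 := fun x hx =>
    ⟨lt_of_lt_of_le hm0 hx.1, lt_of_le_of_lt hx.2 hX1⟩
  have hmmin : m ≤ Mu ∧ m ≤ Mv := ⟨min_le_left _ _, min_le_right _ _⟩
  have hmcases : m = Mu ∨ m = Mv := min_cases Mu Mv |>.imp (fun h => h.1) (fun h => h.1)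
  clear_value m X
  obtain ⟨Mσ, hMσ, hslope⟩ := exists_hasDerivAt_eq_slope (ffun p a b) (fder p a b) hmX
    (fun x hx => (ffun_hasDeriv ha hpc hppos (hIccsub hx)).continuousAt.continuousWithinAt)
    (fun x hx => ffun_hasDeriv ha hpc hppos (hIccsub ⟨hx.1.le, hx.2.le⟩))
  have hMσIoo : Mσ ∈ Ioo (0:ℝ) 1 := hIccsub ⟨hMσ.1.le, hMσ.2.le⟩
  refine ⟨Mσ, hMσ, ?_⟩
  -- notation
  set A : ℝ := ffun p a b Mu with hAdef
  set B : ℝ := ffun p a b Mv with hBdef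
  set P : ℝ := (p Mu ^ 2 + p Mv ^ 2) / 2 with hPdef
  set D : ℝ := Mv - Mu with hDdef
  have hBA : B - A = fder p a b Mσ * D := by
    rw [hAdef, hBdef, hDdef]
    have hXm : X - m ≠ 0 := sub_ne_zero.mpr hmX.ne'
    have h1 : ffun p a b X - ffun p a b m = fder p a b Mσ * (X - m) := by
      rw [hslope]; field_simp
    rcases le_or_gt Mu Mv with hcase | hcase
    · rw [hmdef, hXdef, min_eq_left hcase, max_eq_right hcase] at h1
      exact h1
    · rw [hmdef, hXdef, min_eq_right hcase.le, max_eq_left hcase.le] at h1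
      linarith [h1]
  have hfd0 : 0 ≤ fder p a b Mσ := fder_nonneg ha hb hpc hpa hppos hMσIoo
  have hA0 : 0 ≤ A := Real.sqrt_nonneg _
  have hB0 : 0 ≤ B := Real.sqrt_nonneg _
  have hpu := hppos Mu ⟨hMu.1.le, hMu.2⟩
  have hpv := hppos Mv ⟨hMv.1.le, hMv.2⟩
  have hP0 : 0 ≤ P := by rw [hPdef]; positivity
  -- rewrite sqrt (qfun / p) as ffun
  have hru : Real.sqrt (qfun p a b Mu / p Mu) = A := by rw [hqf Mu hMu, hAdef, ffun]
  have hrv : Real.sqrt (qfun p a b Mv / p Mv) = B := by rw [hqf Mv hMv, hBdef, ffun]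
  rw [hru, hrv]
  -- sum identity
  set S1 : ℝ := ∑ i, (Real.sqrt (v i) - Real.sqrt (u i)) ^ 2 with hS1def
  set S2 : ℝ := ∑ i, (Real.sqrt (v i) + Real.sqrt (u i)) ^ 2 with hS2def
  have hS1nn : 0 ≤ S1 := by rw [hS1def]; exact Finset.sum_nonneg fun i _ => sq_nonneg _
  have hS2nn : 0 ≤ S2 := by rw [hS2def]; exact Finset.sum_nonneg fun i _ => sq_nonneg _
  clear_value A B P D S1 S2
  have hsum : (∑ i, P * (Real.sqrt (v i) * B - Real.sqrt (u i) * A) ^ 2)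
      = P * (((A + B) / 2) ^ 2 * S1 + ((B - A) / 2) ^ 2 * S2 + ((B ^ 2 - A ^ 2) / 2) * D) := by
    rw [← Finset.mul_sum]
    congr 1
    have hterm : ∀ i : Fin n, (Real.sqrt (v i) * B - Real.sqrt (u i) * A) ^ 2
        = ((A + B) / 2) ^ 2 * (Real.sqrt (v i) - Real.sqrt (u i)) ^ 2
          + ((B - A) / 2) ^ 2 * (Real.sqrt (v i) + Real.sqrt (u i)) ^ 2
          + ((B ^ 2 - A ^ 2) / 2) * (v i - u i) := by
      intro i
      have hx : Real.sqrt (v i) ^ 2 = v i := Real.sq_sqrt (hv i)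
      have hy : Real.sqrt (u i) ^ 2 = u i := Real.sq_sqrt (hu i)
      linear_combination ((B ^ 2 - A ^ 2) / 2) * hx - ((B ^ 2 - A ^ 2) / 2) * hy
    rw [Finset.sum_congr rfl (fun i _ => hterm i), Finset.sum_add_distrib,
      Finset.sum_add_distrib, ← Finset.mul_sum, ← Finset.mul_sum, ← Finset.mul_sum,
      Finset.sum_sub_distrib, ← hMudef, ← hMvdef, ← hS1def, ← hS2def, ← hDdef]
  rw [hsum]
  -- bound (1)
  have hmin : min (p Mu * qfun p a b Mu) (p Mv * qfun p a b Mv) ≤ 2 * P * ((A + B) / 2) ^ 2 := by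
    rw [hpq Mu hMu, hpq Mv hMv, ← hAdef, ← hBdef]
    set m0 : ℝ := min (p Mu ^ 2 * A ^ 2) (p Mv ^ 2 * B ^ 2) with hm0def
    have h1 : m0 ≤ p Mu ^ 2 * A ^ 2 := min_le_left _ _
    have h2 : m0 ≤ p Mv ^ 2 * B ^ 2 := min_le_right _ _
    have hm0nn : 0 ≤ m0 := le_min (by positivity) (by positivity)
    have h3 : m0 ≤ p Mu * A * (p Mv * B) := by
      have e1 : Real.sqrt m0 ≤ p Mu * A := by
        calc Real.sqrt m0 ≤ Real.sqrt (p Mu ^ 2 * A ^ 2) := Real.sqrt_le_sqrt h1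
        _ = Real.sqrt ((p Mu * A) ^ 2) := by ring_nf
        _ = p Mu * A := Real.sqrt_sq (mul_nonneg hpu.le hA0)
      have e2 : Real.sqrt m0 ≤ p Mv * B := by
        calc Real.sqrt m0 ≤ Real.sqrt (p Mv ^ 2 * B ^ 2) := Real.sqrt_le_sqrt h2
        _ = Real.sqrt ((p Mv * B) ^ 2) := by ring_nf
        _ = p Mv * B := Real.sqrt_sq (mul_nonneg hpv.le hB0)
      calc m0 = Real.sqrt m0 * Real.sqrt m0 := (Real.mul_self_sqrt hm0nn).symm
      _ ≤ p Mu * A * (p Mv * B) :=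
          mul_le_mul e1 e2 (Real.sqrt_nonneg _) (mul_nonneg hpu.le hA0)
    rw [hPdef]
    exact min_bound_aux (p Mu) (p Mv) A B m0 hA0 hB0 h1 h2 h3
  -- bound (2)
  have hMσ0 : 0 < Mσ := hMσIoo.1
  have h1Mσ : 0 < 1 - Mσ := by linarith [hMσIoo.2]
  have hW : (0:ℝ) < (1 - Mσ) ^ (1 + b + κ) := by positivity
  have hPp : p Mσ ^ 2 / 2 ≤ P := by
    have hmIcc : m ∈ Icc (0:ℝ) 1 := ⟨hm0.le, by linarith [hmX, hX1]⟩
    have hMσIcc : Mσ ∈ Icc (0:ℝ) 1 := ⟨hMσ0.le, by linarith [hMσIoo.2]⟩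
    have hple : p Mσ ≤ p m := hpa hmIcc hMσIcc hMσ.1.le
    have hpm0 : 0 ≤ p Mσ := (hppos Mσ ⟨hMσ0.le, hMσIoo.2⟩).le
    have hsq : p Mσ ^ 2 ≤ p m ^ 2 := by nlinarith
    rcases hmcases with he | he <;> rw [he] at hsq <;> rw [hPdef] <;>
      linarith [sq_nonneg (p Mv), sq_nonneg (p Mu)]
  have hS2ge : Mσ ≤ S2 := by
    have hge1 : Mv ≤ S2 := by
      rw [hS2def, hMvdef]
      apply Finset.sum_le_sum
      intro i _
      calc v i = Real.sqrt (v i) ^ 2 := (Real.sq_sqrt (hv i)).symm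
      _ ≤ (Real.sqrt (v i) + Real.sqrt (u i)) ^ 2 :=
          pow_le_pow_left₀ (Real.sqrt_nonneg _)
            (le_add_of_nonneg_right (Real.sqrt_nonneg _)) 2
    have hge2 : Mu ≤ S2 := by
      rw [hS2def, hMudef]
      apply Finset.sum_le_sum
      intro i _
      calc u i = Real.sqrt (u i) ^ 2 := (Real.sq_sqrt (hu i)).symm
      _ ≤ (Real.sqrt (v i) + Real.sqrt (u i)) ^ 2 :=
          pow_le_pow_left₀ (Real.sqrt_nonneg _)
            (le_add_of_nonneg_left (Real.sqrt_nonneg _)) 2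
    have : X ≤ S2 := by rw [hXdef]; exact max_le hge2 hge1
    linarith [hMσ.2]
  have hKey := hC₀ Mσ hMσIoo
  have hsplitσ : Mσ ^ (a - 1) = Mσ ^ (a - 2) * Mσ := by
    rw [show a - 1 = (a - 2) + 1 by ring, Real.rpow_add hMσ0, Real.rpow_one]
  have hbound2 : C₀ / 8 * Mσ ^ (a - 1) * D ^ 2 / (1 - Mσ) ^ (1 + b + κ)
      ≤ P * ((B - A) / 2) ^ 2 * S2 := by
    have e0 : P * ((B - A) / 2) ^ 2 * S2 = P * fder p a b Mσ ^ 2 * D ^ 2 * S2 / 4 := by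
      rw [hBA]; ring
    rw [e0]
    have step1 : C₀ / 8 * Mσ ^ (a - 1) * D ^ 2 / (1 - Mσ) ^ (1 + b + κ)
        = (C₀ * Mσ ^ (a - 2) / (1 - Mσ) ^ (1 + b + κ)) * (Mσ * D ^ 2 / 8) := by
      rw [hsplitσ]; field_simp
    rw [step1]
    have hD8 : 0 ≤ Mσ * D ^ 2 / 8 :=
      div_nonneg (mul_nonneg hMσ0.le (sq_nonneg D)) (by norm_num)
    have hnn' : 0 ≤ P * fder p a b Mσ ^ 2 * D ^ 2 / 4 :=
      div_nonneg (mul_nonneg (mul_nonneg hP0 (sq_nonneg _)) (sq_nonneg _)) (by norm_num)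
    calc (C₀ * Mσ ^ (a - 2) / (1 - Mσ) ^ (1 + b + κ)) * (Mσ * D ^ 2 / 8)
        ≤ (p Mσ ^ 2 * fder p a b Mσ ^ 2) * (Mσ * D ^ 2 / 8) :=
          mul_le_mul_of_nonneg_right hKey hD8
    _ ≤ (2 * P * fder p a b Mσ ^ 2) * (Mσ * D ^ 2 / 8) := by
          apply mul_le_mul_of_nonneg_right ?_ hD8
          apply mul_le_mul_of_nonneg_right ?_ (sq_nonneg _)
          linarith
    _ = (P * fder p a b Mσ ^ 2 * D ^ 2 / 4) * Mσ := by ring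
    _ ≤ (P * fder p a b Mσ ^ 2 * D ^ 2 / 4) * S2 :=
          mul_le_mul_of_nonneg_left hS2ge hnn'
    _ = P * fder p a b Mσ ^ 2 * D ^ 2 * S2 / 4 := by ring
  -- bound (3)
  have hbound3 : 0 ≤ P * ((B ^ 2 - A ^ 2) / 2) * D := by
    have : (B ^ 2 - A ^ 2) * D = (B + A) * (fder p a b Mσ) * D ^ 2 := by
      have : B ^ 2 - A ^ 2 = (B + A) * (B - A) := by ring
      rw [this, hBA]; ring
    calc (0:ℝ) ≤ P * ((B + A) * fder p a b Mσ * D ^ 2) / 2 :=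
          div_nonneg (mul_nonneg hP0 (mul_nonneg
            (mul_nonneg (add_nonneg hB0 hA0) hfd0) (sq_nonneg D))) (by norm_num)
    _ = P * ((B ^ 2 - A ^ 2) / 2) * D := by rw [← this]; ring
  -- combine
  have hbound1 : 1 / 2 * min (p Mu * qfun p a b Mu) (p Mv * qfun p a b Mv) * S1
      ≤ P * (((A + B) / 2) ^ 2 * S1) := by
    have : 1 / 2 * min (p Mu * qfun p a b Mu) (p Mv * qfun p a b Mv)
        ≤ P * ((A + B) / 2) ^ 2 := by linarith
    calc 1 / 2 * min (p Mu * qfun p a b Mu) (p Mv * qfun p a b Mv) * S1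
        ≤ (P * ((A + B) / 2) ^ 2) * S1 := mul_le_mul_of_nonneg_right this hS1nn
    _ = P * (((A + B) / 2) ^ 2 * S1) := by ring
  have hexp : P * (((A + B) / 2) ^ 2 * S1 + ((B - A) / 2) ^ 2 * S2 + ((B ^ 2 - A ^ 2) / 2) * D)
      = P * (((A + B) / 2) ^ 2 * S1) + P * ((B - A) / 2) ^ 2 * S2
        + P * ((B ^ 2 - A ^ 2) / 2) * D := by ring
  rw [hexp]
  linarith [hbound1, hbound2, hbound3]
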